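/- arXiv:1205.0621 — 2 statements merged into one kernel-verified Lean document; each statement's English description precedes it below -/
import Mathlib

section
/- Let A be a commutative ring, s ≤ t, and let a be an s×n matrix and b a t×n matrix over A (with appropriate sizes so that f̂a + ĝb makes sense as n degree-one elements). In the exterior algebra on generators f̂_1,...,f̂_s, ĝ_1,...,ĝ_t, consider the product P = Π_{k=1}^n (Σ_i f̂_i a^i_k + Σ_j ĝ_j b^j_k). Then the contraction of P against the top form f̂_1∧···∧f̂_s (i.e., extracting the full f̂_1∧···∧f̂_s component) equals Σ over subsets S ⊆ {1,...,n} of size s and complements of the appropriate sign: sign(S) · det(a_S) · Π_{k ∉ S}(Σ_j ĝ_j b^j_k), where a_S is the s×s submatrix of a with columns in S. -/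
open ExteriorAlgebra

section Generic
variable {B : Type*} [Ring B] {κ : Type*} [DecidableEq κ]

private lemma aux_mul_prod_anticomm (x : B) :
    ∀ (L : List B), (∀ y ∈ L, x * y = -(y * x)) →
      x * L.prod = (-1 : ℤ) ^ L.length • (L.prod * x)
  | [], _ => by simp
  | y :: L, h => by
    have hy := h y (List.mem_cons_self)
    have ih := aux_mul_prod_anticomm x L (fun z hz => h z (List.mem_cons_of_mem _ hz))
    simp only [List.prod_cons, List.length_cons]
    rw [← mul_assoc, hy, neg_mul, mul_assoc, ih, mul_smul_comm, ← neg_smul, pow_succ,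
      mul_neg_one, mul_assoc]

private lemma aux_expand (f g : κ → B) :
    ∀ (l : List κ), l.Nodup →
      (l.map fun k => f k + g k).prod
        = ∑ S ∈ l.toFinset.powerset, (l.map fun k => if k ∈ S then f k else g k).prod
  | [], _ => by simp
  | k :: l, hl => by
    obtain ⟨hkl, hl'⟩ := List.nodup_cons.mp hl
    have hkt : k ∉ l.toFinset := by simpa using hkl
    have ih := aux_expand f g l hl'
    have h1 : ∀ S ∈ l.toFinset.powerset,
        ((k :: l).map fun k' => if k' ∈ S then f k' else g k').prod
          = g k * (l.map fun k' => if k' ∈ S then f k' else g k').prod := by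
      intro S hS
      have : k ∉ S := fun hk => hkt (Finset.mem_powerset.mp hS hk)
      simp [this]
    have h2 : ∀ S ∈ l.toFinset.powerset,
        ((k :: l).map fun k' => if k' ∈ insert k S then f k' else g k').prod
          = f k * (l.map fun k' => if k' ∈ S then f k' else g k').prod := by
      intro S _
      simp only [List.map_cons, List.prod_cons, Finset.mem_insert, true_or, if_true]
      congr 1
      refine congrArg _ (List.map_congr_left fun x hx => ?_)
      have hxk : x ≠ k := fun h => hkl (h ▸ hx)
      simp [Finset.mem_insert, hxk]
    rw [List.map_cons, List.prod_cons, List.toFinset_cons, Finset.sum_powerset_insert hkt,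
      Finset.sum_congr rfl h1, Finset.sum_congr rfl h2, ← Finset.mul_sum, ← Finset.mul_sum,
      ← ih, add_mul]
    exact add_comm _ _

private def auxInv (S : Finset κ) : List κ → ℕ
  | [] => 0
  | k :: l => (if k ∈ S then 0 else (l.filter (· ∈ S)).length) + auxInv S l

private lemma aux_reorder (f g : κ → B) (S : Finset κ)
    (hfg : ∀ j k, g k * f j = -(f j * g k)) :
    ∀ (l : List κ),
      (l.map fun k => if k ∈ S then f k else g k).prod
        = (-1 : ℤ) ^ (auxInv S l) •
            (((l.filter (· ∈ S)).map f).prod * ((l.filter (fun k => k ∉ S)).map g).prod)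
  | [] => by simp [auxInv]
  | k :: l => by
    have ih := aux_reorder f g S hfg l
    by_cases hk : k ∈ S
    · have h1 : (k :: l).filter (· ∈ S) = k :: l.filter (· ∈ S) :=
        List.filter_cons_of_pos (by simpa using hk)
      have h2 : (k :: l).filter (fun k => k ∉ S) = l.filter (fun k => k ∉ S) :=
        List.filter_cons_of_neg (by simpa using hk)
      have h3 : auxInv S (k :: l) = auxInv S l := by simp [auxInv, hk]
      rw [List.map_cons, List.prod_cons, if_pos hk, ih, h1, h2, h3, List.map_cons,
        List.prod_cons, mul_smul_comm, mul_assoc]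
    · have h1 : (k :: l).filter (· ∈ S) = l.filter (· ∈ S) :=
        List.filter_cons_of_neg (by simpa using hk)
      have h2 : (k :: l).filter (fun k => k ∉ S) = k :: l.filter (fun k => k ∉ S) :=
        List.filter_cons_of_pos (by simpa using hk)
      have h3 : auxInv S (k :: l) = (l.filter (· ∈ S)).length + auxInv S l := by
        simp [auxInv, hk]
      rw [List.map_cons, List.prod_cons, if_neg hk, ih, h1, h2, h3, List.map_cons,
        List.prod_cons, mul_smul_comm, ← mul_assoc,
        aux_mul_prod_anticomm (g k) _ (fun y hy => by
          obtain ⟨j, _, rfl⟩ := List.mem_map.mp hy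
          exact hfg j k),
        smul_mul_assoc, smul_smul, ← pow_add, List.length_map, mul_assoc,
        Nat.add_comm (auxInv S l)]

private lemma aux_tri (c : ℕ) : (c + 1) * c / 2 = c * (c - 1) / 2 + c := by
  have h : (c + 1) * c = c * (c - 1) + c * 2 := by
    cases c with
    | zero => rfl
    | succ n => simp only [Nat.succ_sub_one]; ring
  rw [h, Nat.add_mul_div_right _ _ (by norm_num : 0 < 2)]

private lemma aux_inv_congr (S S' : Finset κ) :
    ∀ (l : List κ), (∀ x ∈ l, (x ∈ S ↔ x ∈ S')) → auxInv S l = auxInv S' l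
  | [], _ => rfl
  | k :: l, h => by
    have hmem : ∀ x ∈ l, (x ∈ S ↔ x ∈ S') := fun x hx => h x (List.mem_cons_of_mem _ hx)
    have hfilter : l.filter (· ∈ S) = l.filter (· ∈ S') :=
      List.filter_congr (fun x hx => by simpa using (hmem x hx))
    have hk := h k (List.mem_cons_self)
    simp only [auxInv, aux_inv_congr S S' l hmem, hfilter]
    by_cases hkS : k ∈ S
    · rw [if_pos hkS, if_pos (hk.mp hkS)]
    · rw [if_neg hkS, if_neg (fun h' => hkS (hk.mpr h'))]

private lemma aux_filter_length (S : Finset κ) :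
    ∀ (l : List κ), l.Nodup → (∀ x ∈ S, x ∈ l) → (l.filter (· ∈ S)).length = S.card := by
  intro l hl hS
  have h1 : (l.filter (· ∈ S)).toFinset = S := by
    ext x
    simp only [List.toFinset_filter, Finset.mem_filter, List.mem_toFinset, decide_eq_true_eq]
    exact ⟨fun h => h.2, fun h => ⟨hS x h, h⟩⟩
  conv_rhs => rw [← h1]
  exact (List.toFinset_card_of_nodup (hl.filter _)).symm

private lemma aux_inv_eq (S : Finset κ) :
    ∀ (l : List κ), l.Nodup → (∀ k ∈ S, k ∈ l) →
      auxInv S l + S.card * (S.card - 1) / 2 = ∑ k ∈ S, l.idxOf k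
  | [], _, hS => by
    have : S = ∅ := Finset.eq_empty_of_forall_notMem (fun x hx => by simpa using hS x hx)
    simp [this, auxInv]
  | k :: l, hl, hS => by
    obtain ⟨hkl, hl'⟩ := List.nodup_cons.mp hl
    by_cases hk : k ∈ S
    · -- head is in S
      set S' := S.erase k with hS'
      have hcard : S'.card = S.card - 1 := Finset.card_erase_of_mem hk
      have hpos : 1 ≤ S.card := Finset.card_pos.mpr ⟨k, hk⟩
      have hmemS' : ∀ x ∈ S', x ∈ l := by
        intro x hx
        have hxS := Finset.mem_of_mem_erase hx
        have hxk := Finset.ne_of_mem_erase hx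
        rcases List.mem_cons.mp (hS x hxS) with h | h
        · exact absurd h hxk
        · exact h
      have ih := aux_inv_eq S' l hl' hmemS'
      have hcongr : auxInv S l = auxInv S' l := by
        refine aux_inv_congr S S' l (fun x hx => ?_)
        have hxk : x ≠ k := fun h => hkl (h ▸ hx)
        simp [hS', Finset.mem_erase, hxk]
      have hsum : ∑ x ∈ S, (k :: l).idxOf x
          = ∑ x ∈ S', (l.idxOf x + 1) := by
        rw [← Finset.add_sum_erase _ _ hk, List.idxOf_cons_self, zero_add]
        refine Finset.sum_congr rfl (fun x hx => ?_)
        have hxk : x ≠ k := Finset.ne_of_mem_erase hx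
        rw [List.idxOf_cons_ne _ (Ne.symm hxk)]
      rw [hsum, Finset.sum_add_distrib, Finset.sum_const, smul_eq_mul, mul_one, ← ih]
      simp only [auxInv, if_pos hk, zero_add, hcongr, hcard]
      have h2 : S.card * (S.card - 1) / 2 = (S.card - 1) * (S.card - 1 - 1) / 2 + (S.card - 1) := by
        obtain ⟨c, hc⟩ : ∃ c, S.card = c + 1 := ⟨S.card - 1, by omega⟩
        rw [hc]
        simpa using aux_tri c
      omega
    · -- head not in S
      have hmemS : ∀ x ∈ S, x ∈ l := by
        intro x hx
        rcases List.mem_cons.mp (hS x hx) with h | h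
        · exact absurd (h ▸ hx) hk
        · exact h
      have ih := aux_inv_eq S l hl' hmemS
      have hflt : (l.filter (· ∈ S)).length = S.card := aux_filter_length S l hl' hmemS
      have hsum : ∑ x ∈ S, (k :: l).idxOf x = ∑ x ∈ S, (l.idxOf x + 1) := by
        refine Finset.sum_congr rfl (fun x hx => ?_)
        have hxk : x ≠ k := fun h => hk (h ▸ hx)
        rw [List.idxOf_cons_ne _ (Ne.symm hxk)]
      rw [hsum, Finset.sum_add_distrib, Finset.sum_const, smul_eq_mul, mul_one, ← ih]
      simp only [auxInv, if_neg hk, hflt]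
      omega

end Generic
section Ext
variable {R : Type*} [CommRing R] {M : Type*} [AddCommGroup M] [Module R M]

private lemma aux_iota_anticomm (x y : M) :
    ι R y * ι R x = -(ι R x * ι R y) :=
  eq_neg_of_add_eq_zero_left (by rw [add_comm]; exact ι_add_mul_swap x y)

private lemma aux_mem_prod_zero :
    ∀ (L : List M) (x : M), x ∈ L → ι R x * (L.map (ι R)).prod = 0
  | y :: L, x, hx => by
    rw [List.map_cons, List.prod_cons]
    rcases List.mem_cons.mp hx with rfl | hx'
    · rw [← mul_assoc, ι_sq_zero, zero_mul]
    · rw [← mul_assoc, aux_iota_anticomm y x, neg_mul, mul_assoc,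
        aux_mem_prod_zero L x hx', mul_zero, neg_zero]

private lemma aux_dup_prod :
    ∀ (L : List M), ¬ L.Nodup → (L.map (ι R)).prod = 0
  | [], h => absurd List.nodup_nil h
  | y :: L, h => by
    rw [List.map_cons, List.prod_cons]
    by_cases hy : y ∈ L
    · exact aux_mem_prod_zero L y hy
    · have : ¬ L.Nodup := fun hL => h (List.nodup_cons.mpr ⟨hy, hL⟩)
      rw [aux_dup_prod L this, mul_zero]

private lemma aux_expand_span (N : ℕ) (v : Fin N → M) :
    ∀ (n : ℕ) (c : Fin n → Fin N → R),
      (List.ofFn fun k => ι R (∑ i, c k i • v i)).prod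
        = ∑ w : Fin n → Fin N,
            (∏ k, c k (w k)) • (List.ofFn fun k => ι R (v (w k))).prod
  | 0, c => by
    rw [Fintype.sum_unique]
    simp
  | n + 1, c => by
    have ih := aux_expand_span N v n (fun k => c k.succ)
    rw [List.ofFn_succ, List.prod_cons]
    have hhead : ι R (∑ i, c 0 i • v i) = ∑ i, c 0 i • ι R (v i) := by
      rw [map_sum]
      simp [map_smul]
    rw [hhead, Finset.sum_mul]
    have hterm : ∀ i : Fin N,
        (c 0 i • ι R (v i)) * (List.ofFn fun k : Fin n => ι R (∑ j, c k.succ j • v j)).prod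
          = ∑ w : Fin n → Fin N,
              (c 0 i * ∏ k, c k.succ (w k)) •
                (ι R (v i) * (List.ofFn fun k => ι R (v (w k))).prod) := by
      intro i
      rw [smul_mul_assoc, ih, Finset.mul_sum, Finset.smul_sum]
      refine Finset.sum_congr rfl (fun w _ => ?_)
      rw [mul_smul_comm, smul_smul]
    rw [Finset.sum_congr rfl (fun i _ => hterm i)]
    rw [← Equiv.sum_comp (Fin.consEquiv (fun _ => Fin N))
      (fun w : Fin (n + 1) → Fin N =>
        (∏ k, c k (w k)) • (List.ofFn fun k => ι R (v (w k))).prod), Fintype.sum_prod_type]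
    refine Finset.sum_congr rfl (fun i _ => Finset.sum_congr rfl (fun w _ => ?_))
    have h1 : (Fin.consEquiv (fun _ => Fin N)) (i, w) = Fin.cons i w := rfl
    rw [h1, Fin.prod_univ_succ, List.ofFn_succ, List.prod_cons]
    simp [Fin.cons_succ, Fin.cons_zero]

private lemma aux_prod_zero_of_span (N : ℕ) (v : Fin N → M) (L : List M)
    (hL : ∀ x ∈ L, x ∈ Submodule.span R (Set.range v)) (h : N < L.length) :
    (L.map (ι R)).prod = 0 := by
  have hc : ∀ k : Fin L.length, ∃ c : Fin N → R, ∑ i, c i • v i = L.get k := by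
    intro k
    exact (Submodule.mem_span_range_iff_exists_fun R).mp (hL (L.get k) (L.get_mem k))
  choose c hc using hc
  have hL1 : L.map (ι R) = List.ofFn fun k => ι R (∑ i, c k i • v i) := by
    conv_lhs => rw [← List.ofFn_get L, List.map_ofFn]
    exact congrArg List.ofFn (funext fun k => by simp [Function.comp, hc])
  rw [hL1, aux_expand_span N v L.length c]
  refine Finset.sum_eq_zero (fun w _ => ?_)
  have hw : ¬ Function.Injective w := by
    intro hw
    have := Fintype.card_le_of_injective w hw
    simp only [Fintype.card_fin] at this
    omega
  have hvw : ¬ Function.Injective (fun k => v (w k)) := fun hinj => hw fun a b hab =>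
    hinj (congrArg v hab)
  have hnodup : ¬ (List.ofFn fun k => v (w k)).Nodup := fun hn =>
    hvw (List.nodup_ofFn.mp hn)
  have : (List.ofFn fun k => ι R (v (w k))) = (List.ofFn fun k => v (w k)).map (ι R) := by
    rw [List.map_ofFn]
    rfl
  rw [this, aux_dup_prod _ hnodup, smul_zero]

end Ext
section Contract
variable {R : Type*} [CommRing R] {M : Type*} [AddCommGroup M] [Module R M]

private lemma aux_val_succAbove {n : ℕ} (p : Fin (n + 1)) (i : Fin n) :
    ((p.succAbove i : Fin (n + 1)) : ℕ)
      = if (i : ℕ) < (p : ℕ) then (i : ℕ) else (i : ℕ) + 1 := by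
  rw [Fin.succAbove, apply_ite Fin.val]
  simp [Fin.lt_def]

private def auxCt (Φ : List (Module.Dual R M)) (x : ExteriorAlgebra R M) :
    ExteriorAlgebra R M :=
  Φ.foldl (fun y φ => CliffordAlgebra.contractLeft φ y) x

private lemma auxCt_nil (x : ExteriorAlgebra R M) : auxCt [] x = x := rfl

private lemma auxCt_cons (φ : Module.Dual R M) (Φ : List (Module.Dual R M))
    (x : ExteriorAlgebra R M) :
    auxCt (φ :: Φ) x = auxCt Φ (CliffordAlgebra.contractLeft φ x) := rfl

private lemma auxCt_zero : ∀ (Φ : List (Module.Dual R M)), auxCt Φ (0 : ExteriorAlgebra R M) = 0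
  | [] => rfl
  | φ :: Φ => by rw [auxCt_cons, map_zero, auxCt_zero Φ]

private lemma auxCt_sum {α : Type*} (s : Finset α) :
    ∀ (Φ : List (Module.Dual R M)) (f : α → ExteriorAlgebra R M),
      auxCt Φ (∑ i ∈ s, f i) = ∑ i ∈ s, auxCt Φ (f i)
  | [], f => rfl
  | φ :: Φ, f => by
    rw [auxCt_cons, map_sum, auxCt_sum s Φ]
    exact Finset.sum_congr rfl (fun i _ => by rw [auxCt_cons])

private lemma auxCt_smul (c : R) :
    ∀ (Φ : List (Module.Dual R M)) (x : ExteriorAlgebra R M),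
      auxCt Φ (c • x) = c • auxCt Φ x
  | [], x => rfl
  | φ :: Φ, x => by rw [auxCt_cons, map_smul, auxCt_smul c Φ, auxCt_cons]

private lemma auxCt_zsmul (c : ℤ) :
    ∀ (Φ : List (Module.Dual R M)) (x : ExteriorAlgebra R M),
      auxCt Φ (c • x) = c • auxCt Φ x
  | [], x => rfl
  | φ :: Φ, x => by rw [auxCt_cons, map_zsmul, auxCt_zsmul c Φ, auxCt_cons]

private lemma aux_contract_list_zero (φ : Module.Dual R M) :
    ∀ (L : List M), (∀ x ∈ L, φ x = 0) →
      CliffordAlgebra.contractLeft φ ((L.map (ι R)).prod) = 0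
  | [], _ => by simp
  | x :: L, h => by
    rw [List.map_cons, List.prod_cons, CliffordAlgebra.contractLeft_ι_mul,
      h x (List.mem_cons_self), zero_smul,
      aux_contract_list_zero φ L (fun y hy => h y (List.mem_cons_of_mem _ hy)),
      mul_zero, zero_sub, neg_zero]

private lemma aux_contract_prod_mul (φ : Module.Dual R M) :
    ∀ (L : List M) (G : ExteriorAlgebra R M), CliffordAlgebra.contractLeft φ G = 0 →
      CliffordAlgebra.contractLeft φ ((L.map (ι R)).prod * G)
        = ∑ j : Fin L.length, ((-1 : R) ^ (j : ℕ) * φ (L.get j)) •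
            (((L.eraseIdx (j : ℕ)).map (ι R)).prod * G)
  | [], G, hG => by simpa using hG
  | x :: L, G, hG => by
    have ih := aux_contract_prod_mul φ L G hG
    rw [List.map_cons, List.prod_cons, mul_assoc, CliffordAlgebra.contractLeft_ι_mul, ih,
      Finset.mul_sum, sub_eq_add_neg, ← Finset.sum_neg_distrib]
    have hRHS : (∑ j : Fin (x :: L).length, ((-1 : R) ^ (j : ℕ) * φ ((x :: L).get j)) •
          ((((x :: L).eraseIdx (j : ℕ)).map (ι R)).prod * G))
        = ∑ j : Fin (L.length + 1), ((-1 : R) ^ (j : ℕ) * φ ((x :: L).get j)) •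
          ((((x :: L).eraseIdx (j : ℕ)).map (ι R)).prod * G) := rfl
    rw [hRHS, Fin.sum_univ_succ]
    congr 1
    · simp
    · refine Finset.sum_congr rfl (fun j _ => ?_)
      rw [mul_smul_comm, ← neg_smul]
      have h1 : (x :: L).eraseIdx ((j.succ : ℕ)) = x :: L.eraseIdx (j : ℕ) := rfl
      have h2 : (x :: L).get j.succ = L.get j := rfl
      rw [h1, h2, List.map_cons, List.prod_cons, mul_assoc]
      congr 1
      rw [Fin.val_succ, pow_succ]
      ring

private lemma aux_ct_short :
    ∀ (Φ : List (Module.Dual R M)) (L : List M) (G : ExteriorAlgebra R M),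
      (∀ φ ∈ Φ, CliffordAlgebra.contractLeft φ G = 0) → L.length < Φ.length →
        auxCt Φ ((L.map (ι R)).prod * G) = 0
  | [], L, G, _, h => absurd h (Nat.not_lt_zero _)
  | φ :: Φ, L, G, hG, h => by
    rw [auxCt_cons, aux_contract_prod_mul φ L G (hG φ (List.mem_cons_self)),
      auxCt_sum, Finset.sum_eq_zero]
    intro j _
    rw [auxCt_smul]
    have hlt : (L.eraseIdx (j : ℕ)).length < Φ.length := by
      rw [List.length_eraseIdx]
      have := j.isLt
      simp only [List.length_cons] at h
      simp [this]
      omega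
    rw [aux_ct_short Φ _ G (fun ψ hψ => hG ψ (List.mem_cons_of_mem _ hψ)) hlt, smul_zero]

private lemma aux_ct_det :
    ∀ (Φ : List (Module.Dual R M)) (L : List M) (hL : L.length = Φ.length)
      (N : Matrix (Fin Φ.length) (Fin Φ.length) R)
      (hN : ∀ i j, N i j = (Φ.get i) (L.get (Fin.cast hL.symm j)))
      (G : ExteriorAlgebra R M),
      (∀ φ ∈ Φ, CliffordAlgebra.contractLeft φ G = 0) →
        auxCt Φ ((L.map (ι R)).prod * G) = N.det • G
  | [], L, hL, N, hN, G, hG => by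
    have : L = [] := List.length_eq_zero_iff.mp hL
    subst this
    rw [auxCt_nil, List.map_nil, List.prod_nil, one_mul, Matrix.det_fin_zero, one_smul]
  | φ :: Φ, L, hL, N, hN, G, hG => by
    have hL' : L.length = Φ.length + 1 := by simpa using hL
    set N' : Matrix (Fin (Φ.length + 1)) (Fin (Φ.length + 1)) R := fun i j => N i j with hN'def
    have hN' : ∀ (i j : Fin (Φ.length + 1)), N' i j
        = ((φ :: Φ).get i) (L.get (Fin.cast hL'.symm j)) := fun i j => hN i j
    have hdet' : N.det = ∑ j : Fin (Φ.length + 1),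
        (-1 : R) ^ (j : ℕ) * N' 0 j * (N'.submatrix Fin.succ j.succAbove).det :=
      Matrix.det_succ_row_zero N'
    rw [auxCt_cons, aux_contract_prod_mul φ L G (hG φ (List.mem_cons_self)), auxCt_sum,
      hdet', Finset.sum_smul]
    have hstep : ∀ j : Fin L.length,
        auxCt Φ ((((-1 : R) ^ (j : ℕ) * φ (L.get j)) •
            (((L.eraseIdx (j : ℕ)).map (ι R)).prod * G)))
          = (((-1 : R) ^ (j : ℕ) * φ (L.get j)) *
              (N'.submatrix Fin.succ ((Fin.cast hL' j).succAbove)).det) • G := by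
      intro j
      have hjlt := j.isLt
      have hlen : (L.eraseIdx (j : ℕ)).length = Φ.length := by
        rw [List.length_eraseIdx]
        simp only [hL'] at hjlt ⊢
        simp [hjlt]
      rw [auxCt_smul, aux_ct_det Φ (L.eraseIdx (j : ℕ)) hlen
        (N'.submatrix Fin.succ ((Fin.cast hL' j).succAbove))
        (fun i j' => by
          simp only [Matrix.submatrix_apply]
          rw [hN' (Fin.succ i) ((Fin.cast hL' j).succAbove j')]
          have hrowget : (φ :: Φ).get (Fin.succ i) = Φ.get i := rfl
          rw [hrowget]
          congr 1
          simp only [List.get_eq_getElem, Fin.coe_cast]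
          have hsA : ((((Fin.cast hL' j).succAbove j') : Fin _) : ℕ)
              = if (j' : ℕ) < (j : ℕ) then (j' : ℕ) else (j' : ℕ) + 1 := by
            rw [aux_val_succAbove]
            simp
          simp only [hsA]
          by_cases hc : (j' : ℕ) < (j : ℕ)
          · rw [List.getElem_eraseIdx_of_lt _ hc]
            simp only [if_pos hc]
          · rw [List.getElem_eraseIdx_of_ge _ (Nat.le_of_not_lt hc)]
            simp only [if_neg hc])
        G (fun ψ hψ => hG ψ (List.mem_cons_of_mem _ hψ)), smul_smul]
    rw [Finset.sum_congr rfl (fun j _ => hstep j)]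
    refine Fintype.sum_equiv (finCongr hL') _ _ (fun j => ?_)
    simp only [finCongr_apply]
    have hN0 : N' 0 (Fin.cast hL' j) = φ (L.get j) := by
      rw [hN' 0 (Fin.cast hL' j)]
      have h1 : Fin.cast hL'.symm (Fin.cast hL' j) = j := Fin.ext rfl
      rw [h1]
      rfl
    rw [hN0]
    simp [Fin.coe_cast]

end Contract
section Main
variable (A : Type*) [CommRing A]

set_option maxHeartbeats 2000000 in
set_option synthInstance.maxHeartbeats 200000 in
private lemma aux_main (s t m : ℕ) (a : Fin s → Fin m → A) (b : Fin t → Fin m → A) :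
    (List.finRange s).foldl
        (fun y i => CliffordAlgebra.contractLeft
          (LinearMap.proj (Sum.inl i) : Module.Dual A ((Fin s ⊕ Fin t) → A)) y)
      (((List.finRange m).map (fun k =>
        (∑ i : Fin s, a i k • ι A (Pi.single (Sum.inl i) (1 : A))) +
        (∑ j : Fin t, b j k • ι A (Pi.single (Sum.inr j) (1 : A))))).prod)
      = ∑ S : {S : Finset (Fin m) // S.card = s},
          ((-1 : A) ^ ((∑ k ∈ S.1, (k : ℕ)) + s * (s - 1) / 2) *
            Matrix.det (Matrix.of fun i l : Fin s => a i (S.1.orderIsoOfFin S.2 l))) •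
          ((S.1ᶜ.sort (· ≤ ·)).map
            (fun k => ∑ j : Fin t, b j k • ι A (Pi.single (Sum.inr j) (1 : A)))).prod := by
  classical
  set fa : Fin m → ((Fin s ⊕ Fin t) → A) :=
    fun k => ∑ i, a i k • (Pi.single (Sum.inl i) (1 : A) : (Fin s ⊕ Fin t) → A) with hfa
  set gv : Fin m → ((Fin s ⊕ Fin t) → A) :=
    fun k => ∑ j, b j k • (Pi.single (Sum.inr j) (1 : A) : (Fin s ⊕ Fin t) → A) with hgv
  set Φ : List (Module.Dual A ((Fin s ⊕ Fin t) → A)) :=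
    (List.finRange s).map
      (fun i => (LinearMap.proj (Sum.inl i) : Module.Dual A ((Fin s ⊕ Fin t) → A))) with hΦ
  have hs : Φ.length = s := by simp [hΦ]
  -- evaluations
  have heval1 : ∀ (i : Fin s) (k : Fin m),
      (LinearMap.proj (Sum.inl i) : Module.Dual A ((Fin s ⊕ Fin t) → A)) (fa k) = a i k := by
    intro i k
    simp [hfa, LinearMap.proj_apply, Finset.sum_apply, Pi.single_apply, Sum.inl.injEq]
  have heval0 : ∀ (i : Fin s) (k : Fin m),
      (LinearMap.proj (Sum.inl i) : Module.Dual A ((Fin s ⊕ Fin t) → A)) (gv k) = 0 := by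
    intro i k
    simp [hgv, LinearMap.proj_apply, Finset.sum_apply, Pi.single_apply]
  -- contraction of the g-part vanishes
  have hGzero : ∀ (φ : Module.Dual A ((Fin s ⊕ Fin t) → A)), φ ∈ Φ →
      ∀ (l : List (Fin m)),
      CliffordAlgebra.contractLeft φ (((l.map gv).map (ι A)).prod) = 0 := by
    intro φ hφ l
    obtain ⟨i, _, rfl⟩ := List.mem_map.mp hφ
    refine aux_contract_list_zero _ _ (fun x hx => ?_)
    obtain ⟨k, _, rfl⟩ := List.mem_map.mp hx
    exact heval0 i k
  -- step A : the foldl is auxCt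
  have hct : ∀ x : ExteriorAlgebra A ((Fin s ⊕ Fin t) → A),
      (List.finRange s).foldl
        (fun y i => CliffordAlgebra.contractLeft
          (LinearMap.proj (Sum.inl i) : Module.Dual A ((Fin s ⊕ Fin t) → A)) y) x
      = auxCt Φ x := by
    intro x
    rw [hΦ]
    unfold auxCt
    rw [List.foldl_map]
  rw [hct]
  -- step B : rewrite factors
  have hfac : ((List.finRange m).map (fun k =>
        (∑ i : Fin s, a i k • ι A (Pi.single (Sum.inl i) (1 : A))) +
        (∑ j : Fin t, b j k • ι A (Pi.single (Sum.inr j) (1 : A)))))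
      = (List.finRange m).map (fun k => ι A (fa k) + ι A (gv k)) := by
    refine List.map_congr_left (fun k _ => ?_)
    rw [hfa, hgv]
    simp [map_sum, map_smul]
  rw [hfac]
  -- step C : expand
  rw [aux_expand (fun k => ι A (fa k)) (fun k => ι A (gv k)) (List.finRange m)
    (List.nodup_finRange m), List.toFinset_finRange, Finset.powerset_univ]
  -- step D : push auxCt inside
  rw [auxCt_sum]
  -- step E : compute each term
  have hcase : ∀ S : Finset (Fin m),
      auxCt Φ (((List.finRange m).map
          (fun k => if k ∈ S then ι A (fa k) else ι A (gv k))).prod)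
        = if h : S.card = s then
            ((-1 : A) ^ ((∑ k ∈ S, (k : ℕ)) + s * (s - 1) / 2) *
              Matrix.det (Matrix.of fun i l : Fin s => a i (S.orderIsoOfFin h l))) •
            (((Sᶜ.sort (· ≤ ·)).map gv).map (ι A)).prod
          else 0 := by
    intro S
    -- the filters are the sorted lists
    have hfilter1 : (List.finRange m).filter (· ∈ S) = S.sort (· ≤ ·) := by
      refine List.Perm.eq_of_pairwise'
        (((List.pairwise_lt_finRange m).sublist List.filter_sublist).imp le_of_lt)
        (Finset.pairwise_sort _ _)
        (List.perm_of_nodup_nodup_toFinset_eq ((List.nodup_finRange m).filter _)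
          (Finset.sort_nodup _ _) ?_)
      ext x
      simp [List.mem_toFinset, List.mem_filter, Finset.mem_sort]
    have hfilter2 : (List.finRange m).filter (fun k => k ∉ S) = Sᶜ.sort (· ≤ ·) := by
      refine List.Perm.eq_of_pairwise'
        (((List.pairwise_lt_finRange m).sublist List.filter_sublist).imp le_of_lt)
        (Finset.pairwise_sort _ _)
        (List.perm_of_nodup_nodup_toFinset_eq ((List.nodup_finRange m).filter _)
          (Finset.sort_nodup _ _) ?_)
      ext x
      simp [List.mem_toFinset, List.mem_filter, Finset.mem_sort, Finset.mem_compl]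
    have hreorder := aux_reorder (fun k => ι A (fa k)) (fun k => ι A (gv k)) S
      (fun j k => aux_iota_anticomm (fa j) (gv k)) (List.finRange m)
    rw [hreorder, hfilter1, hfilter2]
    have hmapf : (S.sort (· ≤ ·)).map (fun k => ι A (fa k))
        = ((S.sort (· ≤ ·)).map fa).map (ι A) := by
      rw [List.map_map]; rfl
    have hmapg : (Sᶜ.sort (· ≤ ·)).map (fun k => ι A (gv k))
        = ((Sᶜ.sort (· ≤ ·)).map gv).map (ι A) := by
      rw [List.map_map]; rfl
    rw [hmapf, hmapg, auxCt_zsmul]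
    by_cases h : S.card = s
    · rw [dif_pos h]
      -- determinant case
      have hL : ((S.sort (· ≤ ·)).map fa).length = Φ.length := by
        simp [hs, h]
      set N : Matrix (Fin Φ.length) (Fin Φ.length) A :=
        (Matrix.of fun i l : Fin s => a i (S.orderIsoOfFin h l)).submatrix
          (finCongr hs) (finCongr hs) with hNdef
      have hrow : ∀ i : Fin Φ.length, Φ.get i
          = (LinearMap.proj (Sum.inl ((finCongr hs) i)) :
              Module.Dual A ((Fin s ⊕ Fin t) → A)) := by
        intro i
        have hi : (i : ℕ) < (List.finRange s).length := by
          simpa using Nat.lt_of_lt_of_eq i.isLt hs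
        simp only [List.get_eq_getElem, hΦ, List.getElem_map]
        have h1 : (List.finRange s)[(i : ℕ)]'hi = (List.finRange s).get ⟨(i : ℕ), hi⟩ := rfl
        have h2 : (List.finRange s)[(i : ℕ)]'hi = (finCongr hs) i := by
          rw [h1, List.get_finRange]
          exact Fin.ext rfl
        rw [h2]
      have hN : ∀ (i j : Fin Φ.length),
          N i j = (Φ.get i) (((S.sort (· ≤ ·)).map fa).get (Fin.cast hL.symm j)) := by
        intro i j
        have hj : (j : ℕ) < (S.sort (· ≤ ·)).length := by
          simpa [Finset.length_sort, h] using Nat.lt_of_lt_of_eq j.isLt hs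
        have hcol : ((S.sort (· ≤ ·)).map fa).get (Fin.cast hL.symm j)
            = fa ((S.sort (· ≤ ·)).get ⟨(j : ℕ), hj⟩) := by
          simp [List.get_eq_getElem, List.getElem_map]
        rw [hcol, hrow i, heval1]
        simp only [hNdef, Matrix.submatrix_apply, Matrix.of_apply]
        congr 1
      rw [aux_ct_det Φ ((S.sort (· ≤ ·)).map fa) hL N hN _
        (fun φ hφ => hGzero φ hφ _)]
      have hNdet : N.det
          = Matrix.det (Matrix.of fun i l : Fin s => a i (S.orderIsoOfFin h l)) :=
        Matrix.det_submatrix_equiv_self _ _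
      rw [hNdet]
      have hinv : auxInv S (List.finRange m) + s * (s - 1) / 2 = ∑ k ∈ S, (k : ℕ) := by
        have h2 := aux_inv_eq S (List.finRange m) (List.nodup_finRange m)
          (fun k _ => List.mem_finRange k)
        rw [h] at h2
        rw [h2]
        exact Finset.sum_congr rfl (fun k _ => by simp)
      have hexp : (∑ k ∈ S, (k : ℕ)) + s * (s - 1) / 2
          = auxInv S (List.finRange m) + 2 * (s * (s - 1) / 2) := by omega
      rw [← Int.cast_smul_eq_zsmul A, smul_smul, hexp, pow_add, pow_mul, neg_one_sq, one_pow,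
        mul_one]
      push_cast
      rfl
    · rw [dif_neg h]
      rcases Nat.lt_or_ge S.card s with hlt | hge
      · -- too few factors : contraction kills it
        rw [aux_ct_short Φ ((S.sort (· ≤ ·)).map fa) _
          (fun φ hφ => hGzero φ hφ _) (by simp [hs]; omega), smul_zero]
      · -- too many factors : the product of f's vanishes
        have hgt : s < ((S.sort (· ≤ ·)).map fa).length := by
          simp only [List.length_map, Finset.length_sort]
          omega
        rw [aux_prod_zero_of_span s (fun i => (Pi.single (Sum.inl i) (1 : A) : (Fin s ⊕ Fin t) → A))
          ((S.sort (· ≤ ·)).map fa)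
          (fun x hx => by
            obtain ⟨k, _, rfl⟩ := List.mem_map.mp hx
            exact (Submodule.mem_span_range_iff_exists_fun A).mpr ⟨fun i => a i k, rfl⟩) hgt,
          zero_mul, auxCt_zero, smul_zero]
  rw [Finset.sum_congr rfl (fun S _ => hcase S)]
  rw [← Finset.sum_subset (Finset.filter_subset (fun S : Finset (Fin m) => S.card = s)
      Finset.univ) (fun S _ hS => dif_neg (by simpa using hS)),
    Finset.sum_subtype (p := fun S : Finset (Fin m) => S.card = s) _
      (fun S => by simp) _]
  refine Finset.sum_congr rfl (fun S _ => ?_)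
  rw [dif_pos S.2]
  congr 1
  rw [List.map_map]
  refine congrArg List.prod (List.map_congr_left (fun k _ => ?_))
  simp [hgv, Function.comp, map_sum, map_smul]

end Main

set_option maxHeartbeats 1000000 in
/-- In the exterior algebra on `f̂₁,...,f̂ₛ, ĝ₁,...,ĝₜ`, consider
`P = Πₖ (Σᵢ f̂ᵢ aⁱₖ + Σⱼ ĝⱼ bʲₖ)` (product over `k = 1,...,m` in order).
Contracting `P` against the dual top `f̂`-form (interior products by the dual
basis elements, normalized so that `f̂₁∧···∧f̂ₛ ↦ 1`) yields
`Σ_{S ⊆ {1..m}, |S| = s} sign(S) · det(a_S) · Π_{k∉S, asc} (Σⱼ ĝⱼ bʲₖ)`,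
where `a_S` is the `s×s` submatrix of `a` with columns in `S` (in increasing
order) and `sign(S) = (−1)^{Σ_{k∈S} k + s(s−1)/2}` is the shuffle sign. -/
theorem stmt3 (A : Type*) [CommRing A] (s t m : ℕ)
    (a : Fin s → Fin m → A) (b : Fin t → Fin m → A) :
    letI e : (Fin s ⊕ Fin t) → ExteriorAlgebra A ((Fin s ⊕ Fin t) → A) :=
      fun i => ι A (Pi.single i (1 : A))
    letI gb : Fin m → ExteriorAlgebra A ((Fin s ⊕ Fin t) → A) :=
      fun k => ∑ j : Fin t, b j k • e (Sum.inr j)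
    letI P : ExteriorAlgebra A ((Fin s ⊕ Fin t) → A) :=
      ((List.finRange m).map
        (fun k => (∑ i : Fin s, a i k • e (Sum.inl i)) + gb k)).prod
    letI contractTop : ExteriorAlgebra A ((Fin s ⊕ Fin t) → A) →
        ExteriorAlgebra A ((Fin s ⊕ Fin t) → A) :=
      fun x => (List.finRange s).foldl
        (fun y i => CliffordAlgebra.contractLeft
          (LinearMap.proj (Sum.inl i) : Module.Dual A ((Fin s ⊕ Fin t) → A)) y) x
    contractTop P
      = ∑ S : {S : Finset (Fin m) // S.card = s},
          ((-1 : A) ^ ((∑ k ∈ S.1, (k : ℕ)) + s * (s - 1) / 2) *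
            Matrix.det (Matrix.of fun i l : Fin s => a i (S.1.orderIsoOfFin S.2 l))) •
          ((S.1ᶜ.sort (· ≤ ·)).map gb).prod := by
  exact aux_main A s t m a b
end

section
/- Let R be a commutative ring and for each j = 1,...,n let T_j(x_j) ∈ R[x_j] be a monic polynomial in the single variable x_j, with l_j : R[x_j] → R the functional annihilating (T_j) and dual to x_j^{deg T_j − 1} as above. Set F_j(x) = T_j(x_j) ∈ R[x_1,...,x_n] and let l = l_1 ⊗ ··· ⊗ l_n : R[x] → R. Let ∇^k F_j(x,y) be polynomials with F_j(x) − F_j(y) = Σ_k (x_k − y_k)∇^k F_j(x,y), where one may take ∇^k F_j = 0 for k ≠ j and ∇^j F_j(x,y) = ∇T_j(x_j,y_j). Then applying l in the y-variables to det(∇^k F_j(x,y))_{j,k} yields 1 in R[x]: l_y(det ‖∇F(x,y)‖) = 1. -/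
open MvPolynomial

private lemma mvCancel {R : Type*} [CommRing R] {σ : Type*} [DecidableEq σ] {a b : σ}
    (hab : a ≠ b) {p q : MvPolynomial σ R}
    (h : (X a - X b) * p = (X a - X b) * q) : p = q := by
  set f : MvPolynomial σ R →ₐ[R] MvPolynomial σ R :=
    aeval (fun v => if v = a then X a + X b else X v) with hf
  set g : MvPolynomial σ R →ₐ[R] MvPolynomial σ R :=
    aeval (fun v => if v = a then X a - X b else X v) with hg
  have hgf : g.comp f = AlgHom.id R _ := by
    apply algHom_ext
    intro v
    by_cases hv : v = a
    · subst hv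
      simp [hf, hg, Ne.symm hab]
    · simp [hf, hg, hv]
  have hinj : Function.Injective f := by
    intro x y hxy
    have h2 := congrArg g hxy
    calc x = (g.comp f) x := by rw [hgf]; rfl
    _ = (g.comp f) y := h2
    _ = y := by rw [hgf]; rfl
  apply hinj
  have hX : f (X a - X b) = X a := by
    simp [hf, Ne.symm hab]
  have h3 := congrArg f h
  rw [map_mul, map_mul, hX] at h3
  exact isRegular_X.left h3

private lemma prodMonomial {R σ ι : Type*} [CommSemiring R] (s : Finset ι)
    (m : ι → σ →₀ ℕ) (c : ι → R) :
    ∏ i ∈ s, (monomial (m i) (c i) : MvPolynomial σ R)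
      = monomial (∑ i ∈ s, m i) (∏ i ∈ s, c i) := by
  classical
  induction s using Finset.cons_induction with
  | empty => simp [monomial_zero']
  | cons a s ha ih =>
      rw [Finset.prod_cons, Finset.prod_cons, Finset.sum_cons, ih, monomial_mul]

/-- For each `j` let `Tⱼ ∈ R[z]` be monic of degree `dⱼ ≥ 1`
with `lⱼ : R[z] → R` the functional annihilating `(Tⱼ)` and dual to
`z^{dⱼ−1}`, and let `l = l₁ ⊗ ··· ⊗ lₙ : R[x₁,...,xₙ] → R`.  Set
`Fⱼ(x) = Tⱼ(xⱼ)` and let `∇Tⱼ(xⱼ,yⱼ)` be the divided differences, so the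
matrix `∇F(x,y)` is diagonal with entries `∇Tⱼ`.  Then applying `l` in the
`y`-variables to `det ∇F(x,y)` yields `1` in `R[x]`.  (Variables: the
`2n`-variable ring is `MvPolynomial (Fin n ⊕ Fin n) R`, `inl = x`, `inr = y`.) -/
theorem stmt10 (R : Type*) [CommRing R] (n : ℕ) (d : Fin n → ℕ)
    (hd : ∀ j, 1 ≤ d j) (T : Fin n → Polynomial R)
    (hT : ∀ j, (T j).Monic) (hdeg : ∀ j, (T j).natDegree = d j)
    (lj : Fin n → (Polynomial R →ₗ[R] R))
    (hl0 : ∀ j, ∀ δ : ℕ, δ < d j - 1 → lj j (Polynomial.X ^ δ) = 0)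
    (hl1 : ∀ j, lj j (Polynomial.X ^ (d j - 1)) = 1)
    (hlT : ∀ j, ∀ p : Polynomial R, lj j (T j * p) = 0)
    (l : MvPolynomial (Fin n) R →ₗ[R] R)
    (hl : ∀ δ : Fin n → ℕ,
      l (∏ j : Fin n, X j ^ δ j) = ∏ j : Fin n, lj j (Polynomial.X ^ δ j))
    (D : Fin n → MvPolynomial (Fin n ⊕ Fin n) R)
    (hD : ∀ j, Polynomial.aeval (X (Sum.inl j) : MvPolynomial (Fin n ⊕ Fin n) R) (T j)
            - Polynomial.aeval (X (Sum.inr j)) (T j)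
          = (X (Sum.inl j) - X (Sum.inr j)) * D j) :
    letI ly : MvPolynomial (Fin n ⊕ Fin n) R → MvPolynomial (Fin n) R :=
      fun Q => (AddMonoidAlgebra.coeff Q).sum (fun m c =>
        (c * l (∏ j : Fin n, X j ^ m (Sum.inr j))) •
          ∏ j : Fin n, (X j : MvPolynomial (Fin n) R) ^ m (Sum.inl j))
    ly (Matrix.det (Matrix.diagonal D)) = 1 := by
  classical
  -- the functional `ly` as an additive monoid hom
  let ly : MvPolynomial (Fin n ⊕ Fin n) R →+ MvPolynomial (Fin n) R :=
    { toFun := fun Q => (AddMonoidAlgebra.coeff Q).sum (fun m c =>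
        (c * l (∏ j : Fin n, X j ^ m (Sum.inr j))) •
          ∏ j : Fin n, (X j : MvPolynomial (Fin n) R) ^ m (Sum.inl j)),
      map_zero' := Finsupp.sum_zero_index,
      map_add' := fun P Q => by
        rw [AddMonoidAlgebra.coeff_add]
        exact Finsupp.sum_add_index
          (fun m _ => by rw [zero_mul, zero_smul])
          (fun m _ c₁ c₂ => by rw [add_mul, add_smul]) }
  show ly (Matrix.det (Matrix.diagonal D)) = 1
  have hlymono : ∀ (m : Fin n ⊕ Fin n →₀ ℕ) (c : R),
      ly (monomial m c) = (c * l (∏ j : Fin n, X j ^ m (Sum.inr j))) •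
          ∏ j : Fin n, (X j : MvPolynomial (Fin n) R) ^ m (Sum.inl j) :=
    fun m c => sum_monomial_eq
      (b := fun m c => (c * l (∏ j : Fin n, X j ^ m (Sum.inr j))) •
          ∏ j : Fin n, (X j : MvPolynomial (Fin n) R) ^ m (Sum.inl j))
      (by simp)
  -- index sets and the explicit divided differences
  set t : Fin n → Finset ((_ : ℕ) × ℕ) :=
    fun j => (Finset.range (d j + 1)).sigma (fun i => Finset.range i) with ht
  set mIdx : Fin n → ((_ : ℕ) × ℕ) → (Fin n ⊕ Fin n →₀ ℕ) := fun j q =>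
    Finsupp.single (Sum.inl j) q.2 + Finsupp.single (Sum.inr j) (q.1 - 1 - q.2) with hmIdx
  set E : Fin n → MvPolynomial (Fin n ⊕ Fin n) R := fun j =>
    ∑ q ∈ t j, monomial (mIdx j q) ((T j).coeff q.1) with hE
  have hmono2 : ∀ j q, (monomial (mIdx j q) ((T j).coeff q.1) : MvPolynomial (Fin n ⊕ Fin n) R)
      = C ((T j).coeff q.1) * X (Sum.inl j) ^ q.2 * X (Sum.inr j) ^ (q.1 - 1 - q.2) := by
    intro j q
    rw [C_mul_X_pow_eq_monomial, X_pow_eq_monomial, monomial_mul, mul_one]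
  have key : ∀ j, (X (Sum.inl j) - X (Sum.inr j)) * E j
      = Polynomial.aeval (X (Sum.inl j) : MvPolynomial (Fin n ⊕ Fin n) R) (T j)
        - Polynomial.aeval (X (Sum.inr j)) (T j) := by
    intro j
    rw [Polynomial.aeval_eq_sum_range, Polynomial.aeval_eq_sum_range,
      ← Finset.sum_sub_distrib, hdeg j, hE]
    simp only
    rw [ht]
    simp only
    rw [Finset.sum_sigma (f := fun q => monomial (mIdx j q) ((T j).coeff q.1)),
      Finset.mul_sum]
    apply Finset.sum_congr rfl
    intro i _
    simp only [hmono2]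
    have h1 : ∑ a ∈ Finset.range i,
        (C ((T j).coeff i) * X (Sum.inl j) ^ a * X (Sum.inr j) ^ (i - 1 - a)
          : MvPolynomial (Fin n ⊕ Fin n) R)
        = C ((T j).coeff i) * ∑ a ∈ Finset.range i,
            X (Sum.inl j) ^ a * X (Sum.inr j) ^ (i - 1 - a) := by
      rw [Finset.mul_sum]
      exact Finset.sum_congr rfl (fun a _ => by ring
        )
    rw [h1, show (X (Sum.inl j) - X (Sum.inr j)) *
        (C ((T j).coeff i) * ∑ a ∈ Finset.range i,
          X (Sum.inl j) ^ a * X (Sum.inr j) ^ (i - 1 - a))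
      = C ((T j).coeff i) * ((∑ a ∈ Finset.range i,
          X (Sum.inl j) ^ a * X (Sum.inr j) ^ (i - 1 - a))
          * (X (Sum.inl j) - X (Sum.inr j))) from by ring,
      geom_sum₂_mul]
    rw [mul_sub, ← smul_eq_C_mul, ← smul_eq_C_mul]
  have hDE : ∀ j, D j = E j := by
    intro j
    exact mvCancel (by simp) ((hD j).symm.trans (key j).symm)
  rw [Matrix.det_diagonal, Finset.prod_congr rfl (fun j _ => hDE j), hE]
  rw [Finset.prod_univ_sum t (fun j q => monomial (mIdx j q) ((T j).coeff q.1)), map_sum]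
  -- compute `ly` on each product of monomials
  have hMl : ∀ (F : Fin n → (_ : ℕ) × ℕ) (k : Fin n),
      (∑ j, mIdx j (F j)) (Sum.inl k) = (F k).2 := by
    intro F k
    rw [Finsupp.finset_sum_apply]
    simp [hmIdx, Finsupp.single_apply]
  have hMr : ∀ (F : Fin n → (_ : ℕ) × ℕ) (k : Fin n),
      (∑ j, mIdx j (F j)) (Sum.inr k) = (F k).1 - 1 - (F k).2 := by
    intro F k
    rw [Finsupp.finset_sum_apply]
    rw [Finset.sum_congr rfl (fun x _ =>
      show (mIdx x (F x)) (Sum.inr k) = if x = k then ((F x).1 - 1 - (F x).2) else 0 from by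
        by_cases hx : x = k <;> simp [hmIdx, Finsupp.single_apply, hx])]
    simp
  have hterm : ∀ F : Fin n → (_ : ℕ) × ℕ,
      ly (∏ j, monomial (mIdx j (F j)) ((T j).coeff (F j).1))
      = ∏ j, (C ((T j).coeff (F j).1 * lj j (Polynomial.X ^ ((F j).1 - 1 - (F j).2)))
          * (X j : MvPolynomial (Fin n) R) ^ (F j).2) := by
    intro F
    rw [prodMonomial, hlymono]
    simp only [hMl, hMr]
    rw [hl (fun k => (F k).1 - 1 - (F k).2), smul_eq_C_mul, ← Finset.prod_mul_distrib,
      map_prod, ← Finset.prod_mul_distrib]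
  rw [Finset.sum_congr rfl (fun F _ => hterm F), ← Finset.prod_univ_sum t
    (fun j q => C ((T j).coeff q.1 * lj j (Polynomial.X ^ (q.1 - 1 - q.2)))
      * (X j : MvPolynomial (Fin n) R) ^ q.2)]
  apply Finset.prod_eq_one
  intro j _
  rw [ht]
  simp only
  rw [Finset.sum_sigma (f := fun q : (_ : ℕ) × ℕ =>
    C ((T j).coeff q.1 * lj j (Polynomial.X ^ (q.1 - 1 - q.2)))
      * (X j : MvPolynomial (Fin n) R) ^ q.2)]
  rw [Finset.sum_eq_single_of_mem (d j)
    (Finset.mem_range.mpr (Nat.lt_succ_self _))]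
  · rw [Finset.sum_eq_single_of_mem 0 (Finset.mem_range.mpr (hd j))]
    · have hc : (T j).coeff (d j) = 1 := by
        rw [← hdeg j]; exact (hT j).coeff_natDegree
      simp [hc, hl1 j]
    · intro a ha hane
      have hlt : d j - 1 - a < d j - 1 := by
        have := Finset.mem_range.mp ha
        have := hd j
        omega
      rw [hl0 j _ hlt]
      simp
  · intro i hi hine
    apply Finset.sum_eq_zero
    intro a ha
    have hlt : i - 1 - a < d j - 1 := by
      have := Finset.mem_range.mp ha
      have := Finset.mem_range.mp hi
      have := hd j
      omega
    rw [hl0 j _ hlt]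
    simp
end
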